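/- For every real number α with 0 < α < 1/2, the inequality h₂(α,α) > h₁(α,α) holds, where h₁(α,β) := α(1−α+β)·(1+3α−β)/2 + α²(1−α−β) + 2α² + α³/(1−2α) and h₂(α,β) := αβ(1−α−β) + αβ(1−α+3β) + β(1−α−β)·(1+3β)/2 + 2β² + β³/(1−2β). (This is the key algebraic inequality in the proof of the dominating theorem: with mining powers α = β, the insightful pool's lower-bounded expected reward h₂(α,β)·π₍₀,₀₎ strictly exceeds the selfish pool's expected reward h₁(α,β)·π₍₀,₀₎.) -/
import Mathlib

/-- `h₁(α,β)` : the selfish pool's expected reward coefficient. -/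
noncomputable def h₁ (α β : ℝ) : ℝ :=
  α * (1 - α + β) * ((1 + 3*α - β) / 2) + α^2 * (1 - α - β) + 2*α^2 + α^3 / (1 - 2*α)

/-- `h₂(α,β)` : lower bound coefficient for the insightful pool's expected reward. -/
noncomputable def h₂ (α β : ℝ) : ℝ :=
  α * β * (1 - α - β) + α * β * (1 - α + 3*β) + β * (1 - α - β) * ((1 + 3*β) / 2)
    + 2*β^2 + β^3 / (1 - 2*β)

theorem key_inequality (α : ℝ) (h0 : 0 < α) (h1 : α < 1/2) :
    h₂ α α > h₁ α α := by
  have hne : (1 - 2*α) ≠ 0 := by linarith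
  unfold h₁ h₂
  rw [gt_iff_lt, ← sub_pos]
  have : α * α * (1 - α - α) + α * α * (1 - α + 3*α) + α * (1 - α - α) * ((1 + 3*α) / 2)
      + 2*α^2 + α^3 / (1 - 2*α)
      - (α * (1 - α + α) * ((1 + 3*α - α) / 2) + α^2 * (1 - α - α) + 2*α^2 + α^3 / (1 - 2*α))
      = α^2 * (1 - 2*α) / 2 := by ring
  rw [this]
  have : 0 < 1 - 2*α := by linarith
  positivity
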